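/- Let L > 0 and p ∈ (0,1), and let s₀ ∈ ℝ satisfy p = 1 − L · ∫_{s₀}^{s₀ + 1/L} Φ(s) ds. Then for every L-Lipschitz function g : ℝ → [0,1] with ∫_ℝ g(s) φ(s) ds = p, the objective satisfies ∫_ℝ s · g(s) · φ(s) ds ≤ L · (Φ(s₀ + 1/L) − Φ(s₀)). -/

import Mathlib

open MeasureTheory Real

/-- Standard normal density `φ`. -/
noncomputable def stdGaussPDF (t : ℝ) : ℝ :=
  (Real.sqrt (2 * π))⁻¹ * Real.exp (-t ^ 2 / 2)

/-- Standard normal cumulative distribution function `Φ`. -/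
noncomputable def stdGaussCDF (x : ℝ) : ℝ := ∫ t in Set.Iic x, stdGaussPDF t

open Set Filter

lemma phi_pos (t : ℝ) : 0 < stdGaussPDF t := by
  unfold stdGaussPDF; positivity

lemma phi_cont : Continuous stdGaussPDF := by
  unfold stdGaussPDF; fun_prop

lemma integrable_phi : Integrable stdGaussPDF := by
  unfold stdGaussPDF
  have h : Integrable (fun t : ℝ => Real.exp (-(1/2 : ℝ) * t ^ 2)) :=
    integrable_exp_neg_mul_sq (by norm_num)
  have := h.const_mul (Real.sqrt (2 * π))⁻¹
  convert this using 2 with t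
  ring_nf

lemma integrable_id_mul_phi : Integrable (fun t : ℝ => t * stdGaussPDF t) := by
  unfold stdGaussPDF
  have h : Integrable (fun t : ℝ => t * Real.exp (-(1/2 : ℝ) * t ^ 2)) :=
    integrable_mul_exp_neg_mul_sq (by norm_num)
  have := h.const_mul (Real.sqrt (2 * π))⁻¹
  convert this using 2 with t
  ring_nf

lemma integral_phi : ∫ t, stdGaussPDF t = 1 := by
  unfold stdGaussPDF
  rw [integral_const_mul]
  have h : ∫ t : ℝ, Real.exp (-(1/2 : ℝ) * t ^ 2) = Real.sqrt (π / (1/2)) :=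
    integral_gaussian (1/2)
  have h2 : (fun t : ℝ => Real.exp (-t ^ 2 / 2)) = fun t : ℝ => Real.exp (-(1/2 : ℝ) * t ^ 2) := by
    funext t; ring_nf
  rw [h2, h, inv_mul_eq_one₀ (by positivity), show π / (1/2) = 2 * π by ring]

lemma hasDerivAt_phi (x : ℝ) : HasDerivAt stdGaussPDF (-x * stdGaussPDF x) x := by
  unfold stdGaussPDF
  have h : HasDerivAt (fun t : ℝ => -t ^ 2 / 2) (-x) x := by
    have := ((hasDerivAt_pow 2 x).neg).div_const 2
    exact this.congr_deriv (by push_cast; ring)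
  have := (h.exp).const_mul (Real.sqrt (2 * π))⁻¹
  exact this.congr_deriv (by ring)

lemma tendsto_phi_atTop : Tendsto stdGaussPDF atTop (nhds 0) := by
  unfold stdGaussPDF
  rw [show (0:ℝ) = (Real.sqrt (2*π))⁻¹ * 0 by ring]
  apply Tendsto.const_mul
  apply Real.tendsto_exp_atBot.comp
  have h : Tendsto (fun t : ℝ => t ^ 2 / 2) atTop atTop :=
    (tendsto_pow_atTop (by norm_num)).atTop_div_const (by norm_num)
  have := tendsto_neg_atBot_iff.mpr h
  exact this.congr (fun t => by ring)

lemma cdf_sub (x y : ℝ) : stdGaussCDF y - stdGaussCDF x = ∫ t in x..y, stdGaussPDF t := by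
  unfold stdGaussCDF
  exact intervalIntegral.integral_Iic_sub_Iic integrable_phi.integrableOn
    integrable_phi.integrableOn

lemma hasDerivAt_cdf (x : ℝ) : HasDerivAt stdGaussCDF (stdGaussPDF x) x := by
  have key : ∀ y, stdGaussCDF y = stdGaussCDF 0 + ∫ t in (0:ℝ)..y, stdGaussPDF t := by
    intro y; rw [← cdf_sub]; ring
  have h : HasDerivAt (fun y => stdGaussCDF 0 + ∫ t in (0:ℝ)..y, stdGaussPDF t)
      (stdGaussPDF x) x := by
    apply HasDerivAt.const_add
    exact intervalIntegral.integral_hasDerivAt_right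
      integrable_phi.intervalIntegrable
      (phi_cont.stronglyMeasurableAtFilter _ _) phi_cont.continuousAt
  exact h.congr_of_eventuallyEq (Filter.Eventually.of_forall fun y => key y)

lemma integral_Ioi_phi (b : ℝ) : ∫ t in Ioi b, stdGaussPDF t = 1 - stdGaussCDF b := by
  have := intervalIntegral.integral_Iic_add_Ioi (f := stdGaussPDF) (b := b) (μ := volume)
    integrable_phi.integrableOn integrable_phi.integrableOn
  rw [integral_phi] at this
  unfold stdGaussCDF
  linarith

lemma integral_Ioi_id_mul_phi (b : ℝ) :
    ∫ t in Ioi b, t * stdGaussPDF t = stdGaussPDF b := by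
  have h := integral_Ioi_of_hasDerivAt_of_tendsto (f := fun t => -stdGaussPDF t)
    (f' := fun t => t * stdGaussPDF t) (a := b) (m := 0)
    (phi_cont.neg.continuousWithinAt)
    (fun x _ => by have h := (hasDerivAt_phi x).neg; simp only [neg_mul, neg_neg] at h; exact h)
    integrable_id_mul_phi.integrableOn
    (by simpa using tendsto_phi_atTop.neg)
  rw [h]; ring

lemma intervalIntegral_id_mul_phi (x y : ℝ) :
    ∫ t in x..y, t * stdGaussPDF t = stdGaussPDF x - stdGaussPDF y := by
  have := intervalIntegral.integral_eq_sub_of_hasDerivAt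
    (f := fun t => -stdGaussPDF t) (f' := fun t => t * stdGaussPDF t) (a := x) (b := y)
    (fun t _ => by have h := (hasDerivAt_phi t).neg; simp only [neg_mul, neg_neg] at h; exact h)
    integrable_id_mul_phi.intervalIntegrable
  rw [this]; ring

/-- **Value bound of the one-dimensional optimal control problem.** If `s₀` solves
`p = 1 - L ∫_{s₀}^{s₀+1/L} Φ(s) ds`, then every `L`-Lipschitz `g : ℝ → [0,1]` with
`∫ g φ = p` satisfies `∫ s g(s) φ(s) ds ≤ L (Φ(s₀ + 1/L) - Φ(s₀))`. -/
theorem onedim_control_value_bound (L p s₀ : ℝ) (hL : 0 < L)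
    (hp : p ∈ Set.Ioo (0 : ℝ) 1)
    (hs₀ : p = 1 - L * ∫ s in s₀..(s₀ + 1 / L), stdGaussCDF s)
    (g : ℝ → ℝ)
    (hrange : ∀ s, g s ∈ Set.Icc (0 : ℝ) 1)
    (hlip : ∀ s s', |g s - g s'| ≤ L * |s - s'|)
    (hmass : ∫ s, g s * stdGaussPDF s = p) :
    ∫ s, s * g s * stdGaussPDF s
      ≤ L * (stdGaussCDF (s₀ + 1 / L) - stdGaussCDF s₀) := by
  set a := s₀ with ha
  set b := s₀ + 1 / L with hb
  have hab : a < b := by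
    have : 0 < 1 / L := by positivity
    simp only [ha, hb]; linarith
  -- continuity of g
  have hgcont : Continuous g := by
    have : LipschitzWith L.toNNReal g := by
      apply LipschitzWith.of_dist_le_mul
      intro s t
      rw [Real.dist_eq, Real.dist_eq, Real.coe_toNNReal _ hL.le]
      exact hlip s t
    exact this.continuous
  have hΦcont : Continuous stdGaussCDF :=
    continuous_iff_continuousAt.mpr fun x => (hasDerivAt_cdf x).continuousAt
  -- positivity of the denominator
  have hdenom : 0 < stdGaussCDF b - stdGaussCDF a := by
    rw [cdf_sub]
    exact intervalIntegral.intervalIntegral_pos_of_pos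
      (integrable_phi.intervalIntegrable) phi_pos hab
  set lam := (stdGaussPDF a - stdGaussPDF b) / (stdGaussCDF b - stdGaussCDF a) with hlamdef
  have hlam_eq : lam * (stdGaussCDF b - stdGaussCDF a) = stdGaussPDF a - stdGaussPDF b :=
    div_mul_cancel₀ _ hdenom.ne'
  -- lam ∈ [a, b]
  have hIphiab : stdGaussCDF b - stdGaussCDF a = ∫ s in a..b, stdGaussPDF s := cdf_sub a b
  have hIdphiab : stdGaussPDF a - stdGaussPDF b = ∫ s in a..b, s * stdGaussPDF s :=
    (intervalIntegral_id_mul_phi a b).symm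
  have hlam_ge : a ≤ lam := by
    rw [hlamdef, le_div_iff₀ hdenom, hIphiab, hIdphiab, ← intervalIntegral.integral_const_mul]
    apply intervalIntegral.integral_mono_on hab.le
      ((continuous_const.mul phi_cont).intervalIntegrable a b)
      ((continuous_id.mul phi_cont).intervalIntegrable a b)
    intro s hs
    exact mul_le_mul_of_nonneg_right hs.1 (phi_pos s).le
  have hlam_le : lam ≤ b := by
    rw [hlamdef, div_le_iff₀ hdenom, hIphiab, hIdphiab, ← intervalIntegral.integral_const_mul]
    apply intervalIntegral.integral_mono_on hab.le
      ((continuous_id.mul phi_cont).intervalIntegrable a b)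
      ((continuous_const.mul phi_cont).intervalIntegrable a b)
    intro s hs
    exact mul_le_mul_of_nonneg_right hs.2 (phi_pos s).le
  clear_value lam
  set K := fun s : ℝ => (s - lam) * stdGaussPDF s with hKdef
  have hKcont : Continuous K := by
    simp only [hKdef]; exact (continuous_id.sub continuous_const).mul phi_cont
  have hsaKcont : Continuous fun s : ℝ => (s - a) * K s := by fun_prop
  set F := fun s : ℝ => lam * (stdGaussCDF s - stdGaussCDF a)
      + (stdGaussPDF s - stdGaussPDF a) with hFdef
  have hFa : F a = 0 := by simp [hFdef]
  have hFb : F b = 0 := by simp only [hFdef]; linarith [hlam_eq]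
  have hF_deriv : ∀ s, HasDerivAt F (-K s) s := by
    intro s
    have h1 := (((hasDerivAt_cdf s).sub_const (stdGaussCDF a)).const_mul lam).add
      ((hasDerivAt_phi s).sub_const (stdGaussPDF a))
    exact h1.congr_deriv (by
    simp only [hKdef]; ring)
  have hFcont : Continuous F :=
    continuous_iff_continuousAt.mpr fun x => (hF_deriv x).continuousAt
  have hF_nonneg : ∀ s ∈ Set.Icc a b, 0 ≤ F s := by
    have hmono : MonotoneOn F (Set.Icc a lam) := by
      apply monotoneOn_of_deriv_nonneg (convex_Icc a lam) hFcont.continuousOn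
        (fun x _ => (hF_deriv x).differentiableAt.differentiableWithinAt)
      intro x hx
      rw [interior_Icc, Set.mem_Ioo] at hx
      rw [(hF_deriv x).deriv]
      simp only [hKdef]
      nlinarith [phi_pos x, hx.2]
    have hanti : AntitoneOn F (Set.Icc lam b) := by
      apply antitoneOn_of_deriv_nonpos (convex_Icc lam b) hFcont.continuousOn
        (fun x _ => (hF_deriv x).differentiableAt.differentiableWithinAt)
      intro x hx
      rw [interior_Icc, Set.mem_Ioo] at hx
      rw [(hF_deriv x).deriv]
      simp only [hKdef]
      nlinarith [phi_pos x, hx.1]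
    intro s hs
    rcases le_total s lam with hsl | hsl
    · have := hmono (Set.mem_Icc.mpr ⟨le_refl a, hlam_ge⟩)
        (Set.mem_Icc.mpr ⟨hs.1, hsl⟩) hs.1
      rw [hFa] at this; exact this
    · have := hanti (Set.mem_Icc.mpr ⟨hsl, hs.2⟩)
        (Set.mem_Icc.mpr ⟨hlam_le, le_refl b⟩) hs.2
      rw [hFb] at this; exact this
  clear_value K F
  -- integrability
  have hgφ_int : Integrable (fun s => g s * stdGaussPDF s) := by
    apply Integrable.mono' integrable_phi ((hgcont.mul phi_cont).aestronglyMeasurable)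
    filter_upwards with s
    rw [Real.norm_eq_abs, Pi.mul_apply, abs_mul, abs_of_nonneg (hrange s).1,
      abs_of_nonneg (phi_pos s).le]
    exact mul_le_of_le_one_left (phi_pos s).le (hrange s).2
  have hsgφ_int : Integrable (fun s => s * g s * stdGaussPDF s) := by
    apply Integrable.mono' integrable_id_mul_phi.abs
      (((continuous_id.mul hgcont).mul phi_cont).aestronglyMeasurable)
    filter_upwards with s
    rw [Real.norm_eq_abs, Pi.mul_apply, Pi.mul_apply, id_eq, abs_mul, abs_mul, abs_mul, abs_of_nonneg (phi_pos s).le,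
      abs_of_nonneg (hrange s).1]
    have h1 : |s| * g s ≤ |s| := mul_le_of_le_one_right (abs_nonneg s) (hrange s).2
    exact mul_le_mul_of_nonneg_right h1 (phi_pos s).le
  set W := fun s : ℝ => (s - lam) * g s * stdGaussPDF s with hWdef
  have hW_int : Integrable W := by
    have : W = fun s => s * g s * stdGaussPDF s - lam * (g s * stdGaussPDF s) := by
      funext s; simp only [hWdef]; ring
    rw [this]
    exact hsgφ_int.sub (hgφ_int.const_mul lam)
  have hW_eq : ∫ s, W s = (∫ s, s * g s * stdGaussPDF s) - lam * p := by
    have h1 : ∫ s, W s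
        = ∫ s, (s * g s * stdGaussPDF s - lam * (g s * stdGaussPDF s)) := by
      congr 1; funext s; simp only [hWdef]; ring
    rw [h1, integral_sub hsgφ_int (hgφ_int.const_mul lam), integral_const_mul, hmass]
  clear_value W
  -- splitting
  have hsplit : ∫ s, W s = (∫ s in Set.Iic a, W s) + (∫ s in Set.Ioc a b, W s)
      + (∫ s in Set.Ioi b, W s) := by
    rw [← intervalIntegral.integral_Iic_add_Ioi (b := b) (f := W) (μ := volume)
      hW_int.integrableOn hW_int.integrableOn]
    have h2 := intervalIntegral.integral_Iic_sub_Iic (f := W) (μ := volume) (a := a) (b := b)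
      hW_int.integrableOn hW_int.integrableOn
    rw [intervalIntegral.integral_of_le hab.le] at h2
    linarith
  -- piece 1
  have bound1 : ∫ s in Set.Iic a, W s ≤ 0 := by
    apply setIntegral_nonpos measurableSet_Iic
    intro s hs
    simp only [Set.mem_Iic] at hs
    have h1 : s - lam ≤ 0 := by linarith
    have h2 := (hrange s).1
    have h3 := (phi_pos s).le
    have := mul_nonpos_of_nonpos_of_nonneg h1 (mul_nonneg h2 h3)
    simp only [hWdef]; nlinarith
  -- piece 3
  have bound3 : ∫ s in Set.Ioi b, W s
      ≤ stdGaussPDF b - lam * (1 - stdGaussCDF b) := by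
    have hint : IntegrableOn (fun s => (s - lam) * stdGaussPDF s) (Set.Ioi b) := by
      have : (fun s : ℝ => (s - lam) * stdGaussPDF s)
          = fun s => s * stdGaussPDF s - lam * stdGaussPDF s := by
        funext s; ring
      rw [this]
      exact (integrable_id_mul_phi.sub (integrable_phi.const_mul lam)).integrableOn
    have step1 : ∫ s in Set.Ioi b, W s ≤ ∫ s in Set.Ioi b, (s - lam) * stdGaussPDF s := by
      apply setIntegral_mono_on hW_int.integrableOn hint measurableSet_Ioi
      intro s hs
      simp only [Set.mem_Ioi] at hs
      have h1 : 0 ≤ s - lam := by linarith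
      have h2 := (hrange s).2
      have h3 := (phi_pos s).le
      simp only [hWdef]
      exact mul_le_mul_of_nonneg_right (mul_le_of_le_one_right h1 h2) h3
    have step2 : ∫ s in Set.Ioi b, (s - lam) * stdGaussPDF s
        = stdGaussPDF b - lam * (1 - stdGaussCDF b) := by
      have h1 : ∫ s in Set.Ioi b, (s - lam) * stdGaussPDF s
          = ∫ s in Set.Ioi b, (s * stdGaussPDF s - lam * stdGaussPDF s) := by
        congr 1; funext s; ring
      rw [h1, integral_sub integrable_id_mul_phi.integrableOn
        ((integrable_phi.const_mul lam).integrableOn), integral_const_mul,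
        integral_Ioi_id_mul_phi, integral_Ioi_phi]
    linarith
  -- piece 2
  -- the monotone "defect" function and its Stieltjes measure
  set m := fun s : ℝ => g a + L * (s - a) - g s with hmdef
  have hm_mono : Monotone m := by
    intro s t hst
    have h1 : g t - g s ≤ L * (t - s) := by
      have := (le_abs_self (g t - g s)).trans (hlip t s)
      rwa [abs_of_nonneg (sub_nonneg.mpr hst)] at this
    simp only [hmdef]; linarith
  have hma : m a = 0 := by simp [hmdef]
  have hm_cont : Continuous m :=
    ((continuous_const.add (continuous_const.mul
      (continuous_id.sub continuous_const))).sub hgcont)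
  clear_value m
  have hmono_key : 0 ≤ ∫ s in Set.Ioc a b, m s * K s := by
    set M := fun s : ℝ => m (max a (min s b)) with hMdef
    have hM_mono : Monotone M := fun s t hst =>
      hm_mono (max_le_max le_rfl (min_le_min hst le_rfl))
    have hM_cont : Continuous M :=
      hm_cont.comp (continuous_const.max (continuous_id.min continuous_const))
    set σ : StieltjesFunction ℝ :=
      ⟨M, hM_mono, fun x => hM_cont.continuousAt.continuousWithinAt⟩ with hσdef
    set ν := σ.measure with hνdef
    have hMbot : Filter.Tendsto M Filter.atBot (nhds 0) := by
      apply Filter.Tendsto.congr' _ tendsto_const_nhds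
      filter_upwards [Filter.eventually_le_atBot a] with s hs
      have h1 : min s b = s := min_eq_left (le_trans hs hab.le)
      simp only [hMdef, h1, max_eq_left hs, hma]
    have hMtop : Filter.Tendsto M Filter.atTop (nhds (m b)) := by
      apply Filter.Tendsto.congr' _ tendsto_const_nhds
      filter_upwards [Filter.eventually_ge_atTop b] with s hs
      simp only [hMdef, min_eq_right hs, max_eq_right hab.le]
    haveI hνfin : IsFiniteMeasure ν := by
      constructor
      rw [hνdef, σ.measure_univ hMbot hMtop]
      exact ENNReal.ofReal_lt_top
    haveI hres_fin : IsFiniteMeasure (volume.restrict (Set.Ioc a b)) := by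
      constructor
      rw [Measure.restrict_apply_univ, Real.volume_Ioc]
      exact ENNReal.ofReal_lt_top
    have hνIoc : ∀ s ∈ Set.Ioc a b, (ν (Set.Ioc a s)).toReal = m s := by
      intro s hs
      rw [hνdef, σ.measure_Ioc]
      have hσs : σ s = m s := by
        show M s = m s
        simp only [hMdef, min_eq_left hs.2, max_eq_right hs.1.le]
      have hσa : σ a = 0 := by
        show M a = 0
        simp only [hMdef, min_eq_left hab.le, max_self, hma]
      rw [hσs, hσa, sub_zero, ENNReal.toReal_ofReal (hma ▸ hm_mono hs.1.le)]
    have key : ∫ s in Set.Ioc a b, m s * K s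
        = ∫ s in Set.Ioc a b, ∫ u, Set.indicator (Set.Ioc a s) (fun _ => K s) u ∂ν := by
      apply setIntegral_congr_fun measurableSet_Ioc
      intro s hs
      show m s * K s = ∫ u, Set.indicator (Set.Ioc a s) (fun _ => K s) u ∂ν
      rw [integral_indicator_const _ measurableSet_Ioc, smul_eq_mul, measureReal_def, hνIoc s hs]
    -- integrability on the product for Fubini
    obtain ⟨C, hC⟩ := (isCompact_Icc (a := a) (b := b)).exists_bound_of_continuousOn
      hKcont.continuousOn
    have hC0 : 0 ≤ C := le_trans (norm_nonneg (K a)) (hC a (Set.left_mem_Icc.mpr hab.le))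
    have hset : MeasurableSet {q : ℝ × ℝ | a < q.2 ∧ q.2 ≤ q.1} :=
      (measurableSet_lt measurable_const measurable_snd).inter
        (measurableSet_le measurable_snd measurable_fst)
    have heqf : Function.uncurry (fun s u => Set.indicator (Set.Ioc a s) (fun _ => K s) u)
        = Set.indicator {q : ℝ × ℝ | a < q.2 ∧ q.2 ≤ q.1} (fun q => K q.1) := by
      funext q
      rcases q with ⟨s, u⟩
      simp only [Function.uncurry, Set.indicator, Set.mem_Ioc, Set.mem_setOf_eq]
    have hprod_int : Integrable
        (Function.uncurry (fun s u => Set.indicator (Set.Ioc a s) (fun _ => K s) u))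
        ((volume.restrict (Set.Ioc a b)).prod ν) := by
      apply Integrable.mono' (integrable_const C)
      · rw [heqf]
        exact (((hKcont.comp continuous_fst).stronglyMeasurable).indicator
          hset).aestronglyMeasurable
      · have hnull : ((volume.restrict (Set.Ioc a b)).prod ν)
            ((Set.Ioc a b)ᶜ ×ˢ Set.univ) = 0 := by
          rw [Measure.prod_prod, Measure.restrict_apply measurableSet_Ioc.compl]
          simp
        have hae : ∀ᵐ q ∂((volume.restrict (Set.Ioc a b)).prod ν),
            q ∉ ((Set.Ioc a b)ᶜ ×ˢ Set.univ) := measure_eq_zero_iff_ae_notMem.mp hnull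
        filter_upwards [hae] with q hq
        have hq1 : q.1 ∈ Set.Ioc a b := by
          by_contra hcon
          exact hq ⟨hcon, Set.mem_univ _⟩
        rw [heqf]
        by_cases hmem : q ∈ {q : ℝ × ℝ | a < q.2 ∧ q.2 ≤ q.1}
        · rw [Set.indicator_of_mem hmem]
          exact hC q.1 ⟨hq1.1.le, hq1.2⟩
        · rw [Set.indicator_of_notMem hmem]
          simpa using hC0
    have hswap := MeasureTheory.integral_integral_swap
      (μ := volume.restrict (Set.Ioc a b)) (ν := ν)
      (f := fun s u => Set.indicator (Set.Ioc a s) (fun _ => K s) u) hprod_int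
    rw [key, hswap]
    apply integral_nonneg
    intro u
    simp only [Pi.zero_apply]
    by_cases hu : a < u
    · have heq2 : (fun s => Set.indicator (Set.Ioc a s) (fun _ => K s) u)
          = fun s => Set.indicator (Set.Ici u) K s := by
        funext s
        simp only [Set.indicator, Set.mem_Ioc, Set.mem_Ici, hu, true_and]
      rw [heq2, setIntegral_indicator measurableSet_Ici]
      by_cases hub : u ≤ b
      · have hseteq : Set.Ioc a b ∩ Set.Ici u = Set.Icc u b := by
          ext s
          simp only [Set.mem_inter_iff, Set.mem_Ioc, Set.mem_Ici, Set.mem_Icc]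
          constructor
          · rintro ⟨⟨_, h2⟩, h3⟩; exact ⟨h3, h2⟩
          · rintro ⟨h1, h2⟩; exact ⟨⟨lt_of_lt_of_le hu h1, h2⟩, h1⟩
        rw [hseteq]
        have hFu : ∫ s in Set.Icc u b, K s = F u := by
          rw [integral_Icc_eq_integral_Ioc, ← intervalIntegral.integral_of_le hub]
          have h2 := intervalIntegral.integral_eq_sub_of_hasDerivAt (f := fun s => -F s)
            (f' := K) (a := u) (b := b) (fun t _ => by have h := (hF_deriv t).neg; simp only [neg_neg] at h; exact h)
            (hKcont.intervalIntegrable u b)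
          rw [h2]
          show -F b - -F u = F u
          rw [hFb]; ring
        rw [hFu]
        exact hF_nonneg u ⟨hu.le, hub⟩
      · have hseteq : Set.Ioc a b ∩ Set.Ici u = ∅ := by
          ext s
          simp only [Set.mem_inter_iff, Set.mem_Ioc, Set.mem_Ici, Set.mem_empty_iff_false,
            iff_false, not_and]
          rintro ⟨_, h2⟩ h3
          exact hub (le_trans h3 h2)
        rw [hseteq]
        simp
    · have hzero : (fun s => Set.indicator (Set.Ioc a s) (fun _ => K s) u)
          = fun _ => (0:ℝ) := by
        funext s
        apply Set.indicator_of_notMem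
        simp only [Set.mem_Ioc, not_and]
        intro h
        exact absurd h hu
      rw [hzero]
      simp
  have bound2 : ∫ s in Set.Ioc a b, W s ≤ L * ∫ s in a..b, F s := by
    have h1 : ∫ s in Set.Ioc a b, W s
        = g a * (∫ s in Set.Ioc a b, K s)
          + L * (∫ s in Set.Ioc a b, (s - a) * K s)
          - ∫ s in Set.Ioc a b, m s * K s := by
      rw [show W = fun s => (g a * K s + L * ((s - a) * K s)) - m s * K s from
        funext (fun s => by simp only [hWdef, hKdef, hmdef]; ring)]
      rw [integral_sub (f := fun s => g a * K s + L * ((s - a) * K s)) (g := fun s => m s * K s) (((continuous_const.mul hKcont).add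
          (continuous_const.mul hsaKcont)).integrableOn_Ioc)
          ((hm_cont.mul hKcont).integrableOn_Ioc),
        integral_add ((continuous_const.mul hKcont).integrableOn_Ioc)
          ((continuous_const.mul hsaKcont).integrableOn_Ioc) (f := fun s => g a * K s) (g := fun s => L * ((s - a) * K s)),
        integral_const_mul, integral_const_mul]
    have hKval : ∫ s in Set.Ioc a b, K s = 0 := by
      rw [← intervalIntegral.integral_of_le hab.le]
      have h2 := intervalIntegral.integral_eq_sub_of_hasDerivAt (f := fun s => -F s)
        (f' := K) (a := a) (b := b) (fun t _ => by have h := (hF_deriv t).neg; simp only [neg_neg] at h; exact h)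
        (hKcont.intervalIntegrable a b)
      rw [h2]
      show -F b - -F a = 0
      rw [hFa, hFb]; ring
    have hsaKval : ∫ s in Set.Ioc a b, (s - a) * K s = ∫ s in a..b, F s := by
      rw [← intervalIntegral.integral_of_le hab.le]
      have hG : ∀ t : ℝ, HasDerivAt (fun s : ℝ => (s - a) * F s) (F t - (t - a) * K t) t := by
        intro t
        have h := ((hasDerivAt_id t).sub_const a).mul (hF_deriv t)
        have h2 : (1 : ℝ) * F t + (id t - a) * -K t = F t - (t - a) * K t := by
          simp only [id_eq]; ring
        rw [h2] at h
        exact h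
      have h2 := intervalIntegral.integral_eq_sub_of_hasDerivAt (a := a) (b := b)
        (fun t _ => hG t)
        ((hFcont.sub hsaKcont).intervalIntegrable a b)
      rw [intervalIntegral.integral_sub (hFcont.intervalIntegrable a b)
        (hsaKcont.intervalIntegrable a b), hFb] at h2
      have h3 : (b - a) * (0:ℝ) - (a - a) * F a = 0 := by ring
      rw [h3] at h2
      linarith
    rw [h1, hKval, hsaKval]
    have := hmono_key
    nlinarith [hmono_key]
  -- value of ∫ F
  have hIF : ∫ s in a..b, F s
      = lam * (∫ s in a..b, stdGaussCDF s) - lam * stdGaussCDF a * (b - a)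
        + (stdGaussCDF b - stdGaussCDF a) - stdGaussPDF a * (b - a) := by
    have hF_eq : F = fun s => (lam * stdGaussCDF s + stdGaussPDF s)
        + (-(lam * stdGaussCDF a) - stdGaussPDF a) := by
      funext s; simp only [hFdef]; ring
    rw [hF_eq, intervalIntegral.integral_add (f := fun s => lam * stdGaussCDF s + stdGaussPDF s)
      (((continuous_const.mul hΦcont).add phi_cont).intervalIntegrable a b)
      (intervalIntegrable_const),
      intervalIntegral.integral_add (f := fun s => lam * stdGaussCDF s) (g := stdGaussPDF) ((continuous_const.mul hΦcont).intervalIntegrable a b)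
      (phi_cont.intervalIntegrable a b),
      intervalIntegral.integral_const_mul, intervalIntegral.integral_const, ← hIphiab,
      smul_eq_mul]
    ring
  -- final arithmetic
  set IΦ := ∫ s in a..b, stdGaussCDF s with hIΦdef
  have hLIΦ : L * IΦ = 1 - p := by rw [hs₀]; ring
  have hba : L * (b - a) = 1 := by
    have : b - a = 1 / L := by simp only [ha, hb]; ring
    rw [this]; field_simp
  have final_eq : L * (∫ s in a..b, F s) + (stdGaussPDF b - lam * (1 - stdGaussCDF b))
      + lam * p = L * (stdGaussCDF b - stdGaussCDF a) := by
    rw [hIF]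
    linear_combination lam * hLIΦ + (-(lam * stdGaussCDF a) - stdGaussPDF a) * hba + hlam_eq
  have : ∫ s, s * g s * stdGaussPDF s = (∫ s, W s) + lam * p := by linarith [hW_eq]
  rw [this, hsplit]
  linarith [bound1, bound2, bound3, final_eq]
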